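/- For all x₁, x₂ ∈ ℝ, the uniform correlation mixture of bivariate standard Gaussian densities satisfies ∫_{−1}^{1} (1/(4π√(1−ρ²))) · exp(−(x₁² + x₂² − 2ρ x₁x₂)/(2(1−ρ²))) dρ = (1/2)·(1 − Φ(max(|x₁|, |x₂|))). -/

import Mathlib

open MeasureTheory Real Set

/-- Standard normal cumulative distribution function. -/
noncomputable def stdNormalCdf (x : ℝ) : ℝ :=
  ∫ t in Iic x, (1 / Real.sqrt (2 * π)) * Real.exp (-t ^ 2 / 2)

open Filter Topology
namespace UCM

noncomputable def phi (t : ℝ) : ℝ := (1 / Real.sqrt (2 * π)) * Real.exp (-t ^ 2 / 2)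

lemma sqrt2pi_pos : 0 < Real.sqrt (2 * π) := Real.sqrt_pos.2 (by positivity)

lemma phi_pos (t : ℝ) : 0 < phi t := by
  unfold phi; positivity

lemma continuous_phi : Continuous phi := by
  unfold phi
  fun_prop

lemma phi_eq (t : ℝ) : phi t = (1 / Real.sqrt (2 * π)) * Real.exp (-(1/2) * t ^ 2) := by
  unfold phi; ring_nf

lemma integrable_phi : Integrable phi := by
  have h := (integrable_exp_neg_mul_sq (by norm_num : (0:ℝ) < 1/2)).const_mul
    (1 / Real.sqrt (2 * π))
  exact h.congr (by filter_upwards with t; rw [phi_eq])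

lemma integral_phi : ∫ t, phi t = 1 := by
  simp_rw [phi_eq]
  rw [integral_const_mul, integral_gaussian]
  rw [one_div, inv_mul_eq_div, div_eq_one_iff_eq (by positivity)]
  rw [show π / (1/2) = 2 * π by ring]

lemma integrable_abs_mul_phi : Integrable (fun t => |t| * phi t) := by
  have h := integrable_rpow_mul_exp_neg_mul_sq (by norm_num : (0:ℝ) < 1/2) (s := 1)
    (by norm_num)
  simp_rw [Real.rpow_one] at h
  have h2 := (h.abs.const_mul (1 / Real.sqrt (2 * π)))
  refine h2.congr ?_
  filter_upwards with t
  rw [phi_eq, abs_mul, abs_of_nonneg (le_of_lt (Real.exp_pos _))]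
  ring

lemma cdf_eq (x : ℝ) : stdNormalCdf x = ∫ t in Iic x, phi t := rfl

lemma cdf_nonneg (x : ℝ) : 0 ≤ stdNormalCdf x := by
  rw [cdf_eq]
  exact setIntegral_nonneg measurableSet_Iic fun t _ => (phi_pos t).le

lemma cdf_le_one (x : ℝ) : stdNormalCdf x ≤ 1 := by
  rw [cdf_eq, ← integral_phi]
  exact setIntegral_le_integral integrable_phi (by filter_upwards with t using (phi_pos t).le)

lemma hasDerivAt_cdf (y : ℝ) : HasDerivAt stdNormalCdf (phi y) y := by
  have hint : ∀ z : ℝ, IntegrableOn phi (Iic z) := fun z => integrable_phi.integrableOn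
  have key : ∀ z : ℝ, stdNormalCdf z = stdNormalCdf 0 + ∫ t in (0:ℝ)..z, phi t := by
    intro z
    rw [cdf_eq, cdf_eq, ← intervalIntegral.integral_Iic_sub_Iic (hint 0) (hint z)]
    ring
  have hd : HasDerivAt (fun z => stdNormalCdf 0 + ∫ t in (0:ℝ)..z, phi t) (phi y) y :=
    (intervalIntegral.integral_hasDerivAt_right
      (integrable_phi.intervalIntegrable)
      (integrable_phi.aestronglyMeasurable.stronglyMeasurableAtFilter)
      continuous_phi.continuousAt).const_add (stdNormalCdf 0)
  exact hd.congr_of_eventuallyEq (Eventually.of_forall fun z => key z)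

lemma continuous_cdf : Continuous stdNormalCdf :=
  continuous_iff_continuousAt.2 fun y => (hasDerivAt_cdf y).continuousAt

lemma cdf_tendsto_atTop : Tendsto stdNormalCdf atTop (𝓝 1) := by
  rw [← integral_phi]
  have hrw : stdNormalCdf = fun y => ∫ t, (Iic y).indicator phi t := by
    funext y; rw [cdf_eq, integral_indicator measurableSet_Iic]
  rw [hrw]
  refine tendsto_integral_filter_of_dominated_convergence phi ?_ ?_ integrable_phi ?_
  · filter_upwards with y
    exact (integrable_phi.indicator measurableSet_Iic).aestronglyMeasurable
  · filter_upwards with y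
    filter_upwards with t
    rw [Real.norm_eq_abs, abs_of_nonneg (Set.indicator_nonneg (fun t _ => (phi_pos t).le) t)]
    exact Set.indicator_le_self' (fun t _ => (phi_pos t).le) t
  · filter_upwards with t
    have : ∀ᶠ y in atTop, (Iic y).indicator phi t = phi t := by
      filter_upwards [eventually_ge_atTop t] with y hy
      rw [Set.indicator_of_mem (mem_Iic.2 hy)]
    exact Tendsto.congr' (this.mono fun y hy => hy.symm) tendsto_const_nhds

lemma cdf_tendsto_atBot : Tendsto stdNormalCdf atBot (𝓝 0) := by
  have hrw : stdNormalCdf = fun y => ∫ t, (Iic y).indicator phi t := by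
    funext y; rw [cdf_eq, integral_indicator measurableSet_Iic]
  rw [hrw]
  have h0 : (0:ℝ) = ∫ _t : ℝ, (0:ℝ) := by simp
  rw [h0]
  refine tendsto_integral_filter_of_dominated_convergence phi ?_ ?_ integrable_phi ?_
  · filter_upwards with y
    exact (integrable_phi.indicator measurableSet_Iic).aestronglyMeasurable
  · filter_upwards with y
    filter_upwards with t
    rw [Real.norm_eq_abs, abs_of_nonneg (Set.indicator_nonneg (fun t _ => (phi_pos t).le) t)]
    exact Set.indicator_le_self' (fun t _ => (phi_pos t).le) t
  · filter_upwards with t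
    have : ∀ᶠ y in atBot, (Iic y).indicator phi t = 0 := by
      filter_upwards [eventually_lt_atBot t] with y hy
      rw [Set.indicator_of_notMem (by simpa using not_le.2 hy)]
    exact Tendsto.congr' (this.mono fun y hy => hy.symm) tendsto_const_nhds

lemma cdf_neg (y : ℝ) : stdNormalCdf (-y) = 1 - stdNormalCdf y := by
  have heven : ∀ t : ℝ, phi (-t) = phi t := by
    intro t; unfold phi; rw [neg_pow, Even.neg_one_pow even_two, one_mul]
  have h1 : stdNormalCdf (-y) = ∫ t in Ioi y, phi t := by
    rw [cdf_eq]
    have : (∫ t in Iic (-y), phi t) = ∫ t in Iic (-y), phi (-t) := by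
      simp_rw [heven]
    rw [this, integral_comp_neg_Iic (-y) phi, neg_neg]
  have h2 := intervalIntegral.integral_Iic_add_Ioi (μ := volume) (b := y)
    integrable_phi.integrableOn integrable_phi.integrableOn
  rw [integral_phi] at h2
  rw [h1, ← cdf_eq] at *
  linarith




lemma integrable_gauss : Integrable (fun t : ℝ => Real.exp (-t ^ 2 / 2)) := by
  refine (integrable_exp_neg_mul_sq (by norm_num : (0:ℝ) < 1/2)).congr ?_
  filter_upwards with t; ring_nf

lemma integrable_abs_mul_gauss : Integrable (fun t : ℝ => |t| * Real.exp (-t ^ 2 / 2)) := by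
  have h := integrable_rpow_mul_exp_neg_mul_sq (by norm_num : (0:ℝ) < 1/2) (s := 1)
    (by norm_num)
  simp_rw [Real.rpow_one] at h
  refine h.abs.congr ?_
  filter_upwards with t
  rw [abs_mul, abs_of_nonneg (Real.exp_pos _).le]
  ring_nf

lemma hasDerivAt_u (x₂ s : ℝ) {ρ : ℝ} (hρ : ρ ∈ Ioo (-1:ℝ) 1) :
    HasDerivAt (fun r => (x₂ - r * s) / Real.sqrt (1 - r ^ 2))
      ((ρ * x₂ - s) / (Real.sqrt (1 - ρ ^ 2)) ^ 3) ρ := by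
  obtain ⟨h1', h2'⟩ := hρ
  have hsq : 0 < 1 - ρ ^ 2 := by nlinarith
  have hc : 0 < Real.sqrt (1 - ρ ^ 2) := Real.sqrt_pos.2 hsq
  have hc2 : Real.sqrt (1 - ρ ^ 2) ^ 2 = 1 - ρ ^ 2 := Real.sq_sqrt hsq.le
  have h1 : HasDerivAt (fun r : ℝ => 1 - r ^ 2) (-(2 * ρ)) ρ := by
    simpa using ((hasDerivAt_pow 2 ρ).const_sub 1)
  have h2 : HasDerivAt (fun r : ℝ => Real.sqrt (1 - r ^ 2))
      (1 / (2 * Real.sqrt (1 - ρ ^ 2)) * (-(2 * ρ))) ρ :=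
    (Real.hasDerivAt_sqrt hsq.ne').comp ρ h1
  have h3 : HasDerivAt (fun r : ℝ => x₂ - r * s) (-s) ρ := by
    simpa using ((hasDerivAt_id ρ).mul_const s).const_sub x₂
  have h4 := h3.div h2 hc.ne'
  refine h4.congr_deriv (Eq.symm ?_)
  rw [div_eq_div_iff (by positivity) (by positivity)]
  have e : (1 / (2 * Real.sqrt (1 - ρ ^ 2)) * -(2 * ρ)) * Real.sqrt (1 - ρ ^ 2) = -ρ := by
    linear_combination (-ρ) * mul_inv_cancel₀ hc.ne'
  linear_combination (x₂ - ρ * s) * Real.sqrt (1 - ρ ^ 2) ^ 2 * e +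
    s * Real.sqrt (1 - ρ ^ 2) ^ 2 * hc2

lemma phi_mul_phi {ρ : ℝ} (hρ : ρ ∈ Ioo (-1:ℝ) 1) (x₂ s : ℝ) :
    phi s * phi ((x₂ - ρ * s) / Real.sqrt (1 - ρ ^ 2)) =
      1 / (2 * π) * Real.exp (-((s ^ 2 + x₂ ^ 2 - 2 * ρ * s * x₂) / (1 - ρ ^ 2)) / 2) := by
  obtain ⟨h1', h2'⟩ := hρ
  have hsq : 0 < 1 - ρ ^ 2 := by nlinarith
  have hc2 : Real.sqrt (1 - ρ ^ 2) ^ 2 = 1 - ρ ^ 2 := Real.sq_sqrt hsq.le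
  have h2pi : Real.sqrt (2 * π) * Real.sqrt (2 * π) = 2 * π :=
    Real.mul_self_sqrt (by positivity)
  unfold phi
  rw [mul_mul_mul_comm, ← Real.exp_add]
  have hconst : 1 / Real.sqrt (2 * π) * (1 / Real.sqrt (2 * π)) = 1 / (2 * π) := by
    rw [div_mul_div_comm, one_mul, h2pi]
  rw [hconst]
  congr 1
  have hu : ((x₂ - ρ * s) / Real.sqrt (1 - ρ ^ 2)) ^ 2 = (x₂ - ρ * s) ^ 2 / (1 - ρ ^ 2) := by
    rw [div_pow, hc2]
  rw [hu]
  field_simp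
  ring

lemma Q_ge {ρ : ℝ} (hρ : ρ ∈ Ioo (-1:ℝ) 1) (x₂ s : ℝ) :
    s ^ 2 ≤ (s ^ 2 + x₂ ^ 2 - 2 * ρ * s * x₂) / (1 - ρ ^ 2) := by
  obtain ⟨h1', h2'⟩ := hρ
  have hsq : 0 < 1 - ρ ^ 2 := by nlinarith
  rw [le_div_iff₀ hsq]
  nlinarith [sq_nonneg (ρ * s - x₂)]




lemma deriv_bound {x : ℝ} (hx : x ∈ Ioo (-1:ℝ) 1) (x₂ : ℝ) {δ : ℝ} (hδ : 0 < δ)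
    (hδle : δ ≤ 1 - x ^ 2) (s : ℝ) :
    |phi s * (phi ((x₂ - x * s) / Real.sqrt (1 - x ^ 2)) *
        ((x * x₂ - s) / (Real.sqrt (1 - x ^ 2)) ^ 3))| ≤
      1 / (2 * π * Real.sqrt δ ^ 3) *
        (|x₂| * Real.exp (-s ^ 2 / 2) + |s| * Real.exp (-s ^ 2 / 2)) := by
  have hsq : 0 < 1 - x ^ 2 := lt_of_lt_of_le hδ hδle
  have hc : 0 < Real.sqrt (1 - x ^ 2) := Real.sqrt_pos.2 hsq
  have hd : 0 < Real.sqrt δ := Real.sqrt_pos.2 hδ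
  have habs : |phi s * (phi ((x₂ - x * s) / Real.sqrt (1 - x ^ 2)) *
      ((x * x₂ - s) / (Real.sqrt (1 - x ^ 2)) ^ 3))| =
      (phi s * phi ((x₂ - x * s) / Real.sqrt (1 - x ^ 2))) * |x * x₂ - s| /
        (Real.sqrt (1 - x ^ 2)) ^ 3 := by
    rw [abs_mul, abs_mul, abs_div, abs_of_pos (phi_pos _), abs_of_pos (phi_pos _),
      abs_of_pos (by positivity : (0:ℝ) < (Real.sqrt (1 - x ^ 2)) ^ 3)]
    ring
  rw [habs]
  have h1 : phi s * phi ((x₂ - x * s) / Real.sqrt (1 - x ^ 2)) ≤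
      1 / (2 * π) * Real.exp (-s ^ 2 / 2) := by
    rw [phi_mul_phi hx]
    have := Q_ge hx x₂ s
    gcongr
  have h2 : |x * x₂ - s| ≤ |x₂| + |s| := by
    have hx1 : |x| ≤ 1 := by
      rw [abs_le]; exact ⟨hx.1.le, hx.2.le⟩
    calc |x * x₂ - s| ≤ |x * x₂| + |s| := abs_sub _ _
      _ = |x| * |x₂| + |s| := by rw [abs_mul]
      _ ≤ 1 * |x₂| + |s| := by gcongr
      _ = |x₂| + |s| := by ring
  have h3 : Real.sqrt δ ^ 3 ≤ Real.sqrt (1 - x ^ 2) ^ 3 :=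
    pow_le_pow_left₀ (Real.sqrt_nonneg δ) (Real.sqrt_le_sqrt hδle) 3
  calc (phi s * phi ((x₂ - x * s) / Real.sqrt (1 - x ^ 2))) * |x * x₂ - s| /
        (Real.sqrt (1 - x ^ 2)) ^ 3
      ≤ (1 / (2 * π) * Real.exp (-s ^ 2 / 2)) * (|x₂| + |s|) / Real.sqrt δ ^ 3 := by
        gcongr
    _ = 1 / (2 * π * Real.sqrt δ ^ 3) *
        (|x₂| * Real.exp (-s ^ 2 / 2) + |s| * Real.exp (-s ^ 2 / 2)) := by
        field_simp

lemma hasDerivAt_F {ρ : ℝ} (hρ : ρ ∈ Ioo (-1:ℝ) 1) (x₂ s : ℝ) :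
    HasDerivAt (fun t => 1 / (2 * π * Real.sqrt (1 - ρ ^ 2)) *
        Real.exp (-((t ^ 2 + x₂ ^ 2 - 2 * ρ * t * x₂) / (1 - ρ ^ 2)) / 2))
      (phi s * (phi ((x₂ - ρ * s) / Real.sqrt (1 - ρ ^ 2)) *
        ((ρ * x₂ - s) / (Real.sqrt (1 - ρ ^ 2)) ^ 3))) s := by
  have hsq : 0 < 1 - ρ ^ 2 := by nlinarith [hρ.1, hρ.2]
  have hc : 0 < Real.sqrt (1 - ρ ^ 2) := Real.sqrt_pos.2 hsq
  have hc2 : Real.sqrt (1 - ρ ^ 2) ^ 2 = 1 - ρ ^ 2 := Real.sq_sqrt hsq.le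
  have hpoly : HasDerivAt (fun t : ℝ => t ^ 2 + x₂ ^ 2 - 2 * ρ * t * x₂)
      (2 * s - 2 * ρ * x₂) s := by
    have h0 := ((hasDerivAt_pow 2 s).add_const (x₂ ^ 2)).sub
      ((hasDerivAt_id s).const_mul (2 * ρ * x₂))
    have h1 := h0.congr_of_eventuallyEq (Filter.Eventually.of_forall
      (fun t => by simp only [id_eq]; ring : ∀ t : ℝ, t ^ 2 + x₂ ^ 2 - 2 * ρ * t * x₂ =
        t ^ 2 + x₂ ^ 2 - 2 * ρ * x₂ * id t))
    refine h1.congr_deriv (Eq.symm ?_)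
    norm_num
  have hE : HasDerivAt (fun t : ℝ => -((t ^ 2 + x₂ ^ 2 - 2 * ρ * t * x₂) / (1 - ρ ^ 2)) / 2)
      ((ρ * x₂ - s) / (1 - ρ ^ 2)) s := by
    have h := ((hpoly.div_const (1 - ρ ^ 2)).neg).div_const 2
    refine h.congr_deriv (Eq.symm ?_)
    field_simp
    ring
  have hF := (hE.exp).const_mul (1 / (2 * π * Real.sqrt (1 - ρ ^ 2)))
  have key : ∀ c A v : ℝ, c ≠ 0 → c ^ 2 = 1 - ρ ^ 2 →
      1 / (2 * π) * A * (v / c ^ 3) = 1 / (2 * π * c) * (A * (v / (1 - ρ ^ 2))) := by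
    intro c A v hc0 h2
    rw [← h2]
    ring
  refine hF.congr_deriv (Eq.symm ?_)
  rw [← mul_assoc, phi_mul_phi hρ]
  exact key _ _ _ hc.ne' hc2

lemma tendsto_F_atBot {ρ : ℝ} (hρ : ρ ∈ Ioo (-1:ℝ) 1) (x₂ : ℝ) :
    Tendsto (fun s : ℝ => 1 / (2 * π * Real.sqrt (1 - ρ ^ 2)) *
        Real.exp (-((s ^ 2 + x₂ ^ 2 - 2 * ρ * s * x₂) / (1 - ρ ^ 2)) / 2)) atBot (𝓝 0) := by
  have hsq : 0 < 1 - ρ ^ 2 := by nlinarith [hρ.1, hρ.2]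
  have hc : 0 < Real.sqrt (1 - ρ ^ 2) := Real.sqrt_pos.2 hsq
  have hA : Tendsto (fun s : ℝ => s ^ 2) atBot atTop := by
    have := (tendsto_pow_atTop (n := 2) two_ne_zero).comp
      (tendsto_abs_atBot_atTop (G := ℝ))
    simpa [Function.comp_def, sq_abs] using this
  have hB : Tendsto (fun s : ℝ => -s ^ 2 / 2) atBot atBot := by
    have := tendsto_neg_atTop_atBot.comp (hA.atTop_div_const (by norm_num : (0:ℝ) < 2))
    simpa [Function.comp_def, neg_div] using this
  have hg : Tendsto (fun s : ℝ => Real.exp (-s ^ 2 / 2)) atBot (𝓝 0) :=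
    Real.tendsto_exp_atBot.comp hB
  have hub : ∀ s : ℝ, 1 / (2 * π * Real.sqrt (1 - ρ ^ 2)) *
      Real.exp (-((s ^ 2 + x₂ ^ 2 - 2 * ρ * s * x₂) / (1 - ρ ^ 2)) / 2) ≤
      1 / (2 * π * Real.sqrt (1 - ρ ^ 2)) * Real.exp (-s ^ 2 / 2) := fun s => by
    have := Q_ge hρ x₂ s
    gcongr
  have hlb : ∀ s : ℝ, (0:ℝ) ≤ 1 / (2 * π * Real.sqrt (1 - ρ ^ 2)) *
      Real.exp (-((s ^ 2 + x₂ ^ 2 - 2 * ρ * s * x₂) / (1 - ρ ^ 2)) / 2) := fun s => by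
    positivity
  have hmul := hg.const_mul (1 / (2 * π * Real.sqrt (1 - ρ ^ 2)))
  rw [mul_zero] at hmul
  exact tendsto_of_tendsto_of_tendsto_of_le_of_le tendsto_const_nhds hmul hlb hub



lemma integrable_bound (x₂ C : ℝ) :
    Integrable (fun s : ℝ => C * (|x₂| * Real.exp (-s ^ 2 / 2) + |s| * Real.exp (-s ^ 2 / 2))) :=
  ((integrable_gauss.const_mul |x₂|).add integrable_abs_mul_gauss).const_mul C

lemma cont_deriv_integrand (x x₂ : ℝ) :
    Continuous (fun s : ℝ => phi s * (phi ((x₂ - x * s) / Real.sqrt (1 - x ^ 2)) *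
      ((x * x₂ - s) / (Real.sqrt (1 - x ^ 2)) ^ 3))) := by
  apply continuous_phi.mul
  apply Continuous.mul
  · exact continuous_phi.comp
      ((continuous_const.sub (continuous_const.mul continuous_id)).div_const _)
  · exact (continuous_const.sub continuous_id).div_const _

lemma inner_integral {ρ : ℝ} (hρ : ρ ∈ Ioo (-1:ℝ) 1) (x₁ x₂ : ℝ) :
    ∫ s in Iic x₁, phi s * (phi ((x₂ - ρ * s) / Real.sqrt (1 - ρ ^ 2)) *
        ((ρ * x₂ - s) / (Real.sqrt (1 - ρ ^ 2)) ^ 3)) =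
      1 / (2 * π * Real.sqrt (1 - ρ ^ 2)) *
        Real.exp (-(x₁ ^ 2 + x₂ ^ 2 - 2 * ρ * x₁ * x₂) / (2 * (1 - ρ ^ 2))) := by
  have hsq : 0 < 1 - ρ ^ 2 := by nlinarith [hρ.1, hρ.2]
  have hint : IntegrableOn (fun s : ℝ => phi s * (phi ((x₂ - ρ * s) / Real.sqrt (1 - ρ ^ 2)) *
      ((ρ * x₂ - s) / (Real.sqrt (1 - ρ ^ 2)) ^ 3))) (Iic x₁) := by
    refine (Integrable.mono' (integrable_bound x₂ (1 / (2 * π * Real.sqrt (1 - ρ ^ 2) ^ 3)))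
      (cont_deriv_integrand ρ x₂).aestronglyMeasurable ?_).integrableOn
    filter_upwards with s
    rw [Real.norm_eq_abs]
    exact deriv_bound hρ x₂ hsq le_rfl s
  have key := integral_Iic_of_hasDerivAt_of_tendsto' (a := x₁)
    (fun s _ => hasDerivAt_F hρ x₂ s) hint (tendsto_F_atBot hρ x₂)
  rw [key, sub_zero]
  congr 1
  congr 1
  field_simp



lemma hasDerivAt_G (x₁ x₂ : ℝ) {ρ : ℝ} (hρ : ρ ∈ Ioo (-1:ℝ) 1) :
    HasDerivAt (fun r => ∫ s in Iic x₁, phi s *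
        stdNormalCdf ((x₂ - r * s) / Real.sqrt (1 - r ^ 2)))
      (1 / (2 * π * Real.sqrt (1 - ρ ^ 2)) *
        Real.exp (-(x₁ ^ 2 + x₂ ^ 2 - 2 * ρ * x₁ * x₂) / (2 * (1 - ρ ^ 2)))) ρ := by
  obtain ⟨hρ1, hρ2⟩ := hρ
  have habs : |ρ| < 1 := abs_lt.2 ⟨hρ1, hρ2⟩
  set r0 : ℝ := (1 + |ρ|) / 2 with hr0
  have hρr : |ρ| < r0 := by rw [hr0]; linarith
  have hr1 : r0 < 1 := by rw [hr0]; linarith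
  have hr0nn : 0 ≤ r0 := by rw [hr0]; positivity
  have hδ : 0 < 1 - r0 ^ 2 := by nlinarith
  have hεpos : 0 < r0 - |ρ| := by linarith
  have hball : ∀ x ∈ Metric.ball ρ (r0 - |ρ|), |x| < r0 := by
    intro x hx
    rw [Metric.mem_ball, Real.dist_eq] at hx
    have := abs_sub_abs_le_abs_sub x ρ
    linarith
  have hsub : ∀ x : ℝ, |x| < r0 → x ∈ Ioo (-1:ℝ) 1 := by
    intro x hx
    have := abs_lt.1 (hx.trans hr1)
    exact ⟨this.1, this.2⟩
  have hmeas : ∀ x : ℝ, AEStronglyMeasurable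
      (fun s => phi s * stdNormalCdf ((x₂ - x * s) / Real.sqrt (1 - x ^ 2)))
      (volume.restrict (Iic x₁)) := fun x =>
    ((continuous_phi.mul (continuous_cdf.comp
      ((continuous_const.sub (continuous_const.mul continuous_id)).div_const _))).aestronglyMeasurable).restrict
  have hint : Integrable (fun s => phi s * stdNormalCdf ((x₂ - ρ * s) / Real.sqrt (1 - ρ ^ 2)))
      (volume.restrict (Iic x₁)) := by
    refine Integrable.mono' integrable_phi.restrict (hmeas ρ) ?_
    filter_upwards with s
    rw [Real.norm_eq_abs, abs_mul, abs_of_pos (phi_pos s),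
      abs_of_nonneg (cdf_nonneg _)]
    calc phi s * stdNormalCdf ((x₂ - ρ * s) / Real.sqrt (1 - ρ ^ 2))
        ≤ phi s * 1 := by
          have := cdf_le_one ((x₂ - ρ * s) / Real.sqrt (1 - ρ ^ 2))
          gcongr
          exact (phi_pos s).le
      _ = phi s := mul_one _
  have h := hasDerivAt_integral_of_dominated_loc_of_deriv_le (μ := volume.restrict (Iic x₁))
    (x₀ := ρ) (s := Metric.ball ρ (r0 - |ρ|))
    (F := fun x s => phi s * stdNormalCdf ((x₂ - x * s) / Real.sqrt (1 - x ^ 2)))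
    (F' := fun x s => phi s * (phi ((x₂ - x * s) / Real.sqrt (1 - x ^ 2)) *
      ((x * x₂ - s) / (Real.sqrt (1 - x ^ 2)) ^ 3)))
    (bound := fun s => 1 / (2 * π * Real.sqrt (1 - r0 ^ 2) ^ 3) *
      (|x₂| * Real.exp (-s ^ 2 / 2) + |s| * Real.exp (-s ^ 2 / 2)))
    (Metric.ball_mem_nhds ρ hεpos) (Eventually.of_forall hmeas) hint
    ((cont_deriv_integrand ρ x₂).aestronglyMeasurable.restrict) ?_
    ((integrable_bound x₂ _).restrict) ?_
  · have h2 := h.2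
    rwa [inner_integral ⟨hρ1, hρ2⟩ x₁ x₂] at h2
  · filter_upwards with s
    intro x hx
    have hxr := hball x hx
    have hδle : 1 - r0 ^ 2 ≤ 1 - x ^ 2 := by nlinarith [sq_abs x, abs_nonneg x]
    rw [Real.norm_eq_abs]
    exact deriv_bound (hsub x hxr) x₂ hδ hδle s
  · filter_upwards with s
    intro x hx
    exact ((hasDerivAt_cdf _).comp x (hasDerivAt_u x₂ s (hsub x (hball x hx)))).const_mul (phi s)

lemma integrableOn_inv_sqrt :
    IntegrableOn (fun ρ : ℝ => 1 / Real.sqrt (1 - ρ ^ 2)) (Ioc (-1:ℝ) 1) := by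
  refine intervalIntegral.integrableOn_deriv_of_nonneg Real.continuous_arcsin.continuousOn ?_ ?_
  · intro x hx
    exact Real.hasDerivAt_arcsin (ne_of_gt hx.1) (ne_of_lt hx.2)
  · intro x hx
    positivity

lemma integrableOn_g (x₁ x₂ : ℝ) : IntegrableOn (fun ρ : ℝ =>
    1 / (2 * π * Real.sqrt (1 - ρ ^ 2)) *
      Real.exp (-(x₁ ^ 2 + x₂ ^ 2 - 2 * ρ * x₁ * x₂) / (2 * (1 - ρ ^ 2)))) (Ioc (-1:ℝ) 1) := by
  rw [integrableOn_Ioc_iff_integrableOn_Ioo]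
  have hbd : IntegrableOn (fun ρ : ℝ => 1 / (2 * π) * (1 / Real.sqrt (1 - ρ ^ 2)))
      (Ioo (-1:ℝ) 1) :=
    ((integrableOn_inv_sqrt.mono_set Ioo_subset_Ioc_self).const_mul (1 / (2 * π)))
  refine Integrable.mono' hbd ?_ ?_
  · refine ContinuousOn.aestronglyMeasurable ?_ measurableSet_Ioo
    intro x hx
    have hsq : 0 < 1 - x ^ 2 := by nlinarith [hx.1, hx.2]
    have h1 : ContinuousWithinAt (fun ρ : ℝ => 1 / (2 * π * Real.sqrt (1 - ρ ^ 2)))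
        (Ioo (-1:ℝ) 1) x := by
      apply ContinuousWithinAt.div continuousWithinAt_const
      · exact (continuous_const.mul (Real.continuous_sqrt.comp
          (continuous_const.sub (continuous_pow 2)))).continuousWithinAt
      · positivity
    have h2 : ContinuousWithinAt (fun ρ : ℝ =>
        Real.exp (-(x₁ ^ 2 + x₂ ^ 2 - 2 * ρ * x₁ * x₂) / (2 * (1 - ρ ^ 2))))
        (Ioo (-1:ℝ) 1) x := by
      apply Real.continuous_exp.continuousAt.comp_continuousWithinAt
      apply ContinuousWithinAt.div
      · exact (by fun_prop : Continuous (fun ρ : ℝ => -(x₁ ^ 2 + x₂ ^ 2 - 2 * ρ * x₁ * x₂))).continuousWithinAt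
      · exact (by fun_prop : Continuous (fun ρ : ℝ => 2 * (1 - ρ ^ 2))).continuousWithinAt
      · positivity
    exact h1.mul h2
  · filter_upwards [ae_restrict_mem measurableSet_Ioo] with ρ hρ
    have hsq : 0 < 1 - ρ ^ 2 := by nlinarith [hρ.1, hρ.2]
    have hc : 0 < Real.sqrt (1 - ρ ^ 2) := Real.sqrt_pos.2 hsq
    have hQ : 0 ≤ (x₁ ^ 2 + x₂ ^ 2 - 2 * ρ * x₁ * x₂) / (1 - ρ ^ 2) :=
      le_trans (sq_nonneg x₁) (Q_ge hρ x₂ x₁)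
    have hexp : Real.exp (-(x₁ ^ 2 + x₂ ^ 2 - 2 * ρ * x₁ * x₂) / (2 * (1 - ρ ^ 2))) ≤ 1 := by
      rw [Real.exp_le_one_iff]
      rw [div_nonneg_iff] at hQ
      rcases hQ with ⟨hn, _⟩ | ⟨hn, hd⟩
      · rw [neg_div, neg_nonpos]
        positivity
      · nlinarith
    rw [Real.norm_eq_abs, abs_of_nonneg (by positivity)]
    calc 1 / (2 * π * Real.sqrt (1 - ρ ^ 2)) *
          Real.exp (-(x₁ ^ 2 + x₂ ^ 2 - 2 * ρ * x₁ * x₂) / (2 * (1 - ρ ^ 2)))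
        ≤ 1 / (2 * π * Real.sqrt (1 - ρ ^ 2)) * 1 := by gcongr ?_ * ?_
      _ = 1 / (2 * π) * (1 / Real.sqrt (1 - ρ ^ 2)) := by
          rw [mul_one]; ring

lemma aesm_F (x₁ x₂ x : ℝ) : AEStronglyMeasurable
    (fun s => phi s * stdNormalCdf ((x₂ - x * s) / Real.sqrt (1 - x ^ 2)))
    (volume.restrict (Iic x₁)) :=
  ((continuous_phi.mul (continuous_cdf.comp
    ((continuous_const.sub (continuous_const.mul continuous_id)).div_const _))).aestronglyMeasurable).restrict

lemma F_le_phi (x x₂ s : ℝ) :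
    ‖phi s * stdNormalCdf ((x₂ - x * s) / Real.sqrt (1 - x ^ 2))‖ ≤ phi s := by
  rw [Real.norm_eq_abs, abs_mul, abs_of_pos (phi_pos s), abs_of_nonneg (cdf_nonneg _)]
  calc phi s * stdNormalCdf ((x₂ - x * s) / Real.sqrt (1 - x ^ 2))
      ≤ phi s * 1 := by
        have := cdf_le_one ((x₂ - x * s) / Real.sqrt (1 - x ^ 2))
        gcongr
        exact (phi_pos s).le
    _ = phi s := mul_one _

lemma tendsto_sqrt_one : Tendsto (fun r : ℝ => Real.sqrt (1 - r ^ 2)) (𝓝[<] (1:ℝ)) (𝓝[>] 0) := by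
  have hcont : Continuous (fun r : ℝ => Real.sqrt (1 - r ^ 2)) :=
    Real.continuous_sqrt.comp (continuous_const.sub (continuous_pow 2))
  have h0 : Tendsto (fun r : ℝ => Real.sqrt (1 - r ^ 2)) (𝓝[<] (1:ℝ)) (𝓝 0) := by
    have := (hcont.tendsto 1).mono_left (nhdsWithin_le_nhds (s := Iio (1:ℝ)))
    simpa using this
  refine tendsto_nhdsWithin_of_tendsto_nhds_of_eventually_within _ h0 ?_
  filter_upwards [Ioo_mem_nhdsLT_of_mem (show (1:ℝ) ∈ Ioc (-1:ℝ) 1 by norm_num)] with r hr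
  have : 0 < 1 - r ^ 2 := by nlinarith [hr.1, hr.2]
  exact Real.sqrt_pos.2 this

lemma tendsto_sqrt_negone : Tendsto (fun r : ℝ => Real.sqrt (1 - r ^ 2)) (𝓝[>] (-1:ℝ)) (𝓝[>] 0) := by
  have hcont : Continuous (fun r : ℝ => Real.sqrt (1 - r ^ 2)) :=
    Real.continuous_sqrt.comp (continuous_const.sub (continuous_pow 2))
  have h0 : Tendsto (fun r : ℝ => Real.sqrt (1 - r ^ 2)) (𝓝[>] (-1:ℝ)) (𝓝 0) := by
    have := (hcont.tendsto (-1)).mono_left (nhdsWithin_le_nhds (s := Ioi (-1:ℝ)))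
    simpa using this
  refine tendsto_nhdsWithin_of_tendsto_nhds_of_eventually_within _ h0 ?_
  filter_upwards [Ioo_mem_nhdsGT_of_mem (show (-1:ℝ) ∈ Ico (-1:ℝ) 1 by norm_num)] with r hr
  have : 0 < 1 - r ^ 2 := by nlinarith [hr.1, hr.2]
  exact Real.sqrt_pos.2 this

lemma tendsto_u {l : Filter ℝ} {L : ℝ} (x₂ s : ℝ)
    (hnum : Tendsto (fun r : ℝ => x₂ - r * s) l (𝓝 L))
    (hden : Tendsto (fun r : ℝ => Real.sqrt (1 - r ^ 2)) l (𝓝[>] 0)) :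
    (0 < L → Tendsto (fun r : ℝ => (x₂ - r * s) / Real.sqrt (1 - r ^ 2)) l atTop) ∧
    (L < 0 → Tendsto (fun r : ℝ => (x₂ - r * s) / Real.sqrt (1 - r ^ 2)) l atBot) := by
  have hinv : Tendsto (fun r : ℝ => (Real.sqrt (1 - r ^ 2))⁻¹) l atTop :=
    tendsto_inv_nhdsGT_zero.comp hden
  constructor
  · intro hL
    have := hnum.pos_mul_atTop hL hinv
    simpa [div_eq_mul_inv] using this
  · intro hL
    have := hnum.neg_mul_atTop hL hinv
    simpa [div_eq_mul_inv] using this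

lemma tendsto_G_one (x₁ x₂ : ℝ) :
    Tendsto (fun r => ∫ s in Iic x₁, phi s *
        stdNormalCdf ((x₂ - r * s) / Real.sqrt (1 - r ^ 2)))
      (𝓝[<] (1:ℝ)) (𝓝 (stdNormalCdf (min x₁ x₂))) := by
  have hval : stdNormalCdf (min x₁ x₂) = ∫ s in Iic x₁, (Iic x₂).indicator phi s := by
    rw [integral_indicator measurableSet_Iic,
      Measure.restrict_restrict measurableSet_Iic, Iic_inter_Iic, cdf_eq, min_comm]
  rw [hval]
  refine tendsto_integral_filter_of_dominated_convergence phi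
    (Eventually.of_forall (fun r => aesm_F x₁ x₂ r))
    (Eventually.of_forall (fun r => Eventually.of_forall (fun s => F_le_phi r x₂ s)))
    integrable_phi.restrict ?_
  have hae : ∀ᵐ s : ℝ ∂(volume.restrict (Iic x₁)), s ≠ x₂ := by
    refine ae_restrict_of_ae ?_
    rw [ae_iff]
    have : {s : ℝ | ¬s ≠ x₂} = {x₂} := by ext s; simp
    rw [this]
    exact measure_singleton _
  filter_upwards [hae] with s hs
  have hnum : Tendsto (fun r : ℝ => x₂ - r * s) (𝓝[<] (1:ℝ)) (𝓝 (x₂ - s)) := by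
    have : Continuous (fun r : ℝ => x₂ - r * s) := by fun_prop
    have := (this.tendsto 1).mono_left (nhdsWithin_le_nhds (s := Iio (1:ℝ)))
    simpa using this
  rcases lt_or_gt_of_ne hs with h | h
  · have hu := (tendsto_u x₂ s hnum tendsto_sqrt_one).1 (by linarith)
    have hcomp := cdf_tendsto_atTop.comp hu
    have hmul := hcomp.const_mul (phi s)
    rw [mul_one] at hmul
    rw [Set.indicator_of_mem (mem_Iic.2 h.le)]
    exact hmul
  · have hu := (tendsto_u x₂ s hnum tendsto_sqrt_one).2 (by linarith)
    have hcomp := cdf_tendsto_atBot.comp hu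
    have hmul := hcomp.const_mul (phi s)
    rw [mul_zero] at hmul
    rw [Set.indicator_of_notMem (by simpa using h)]
    exact hmul

lemma tendsto_G_negone (x₁ x₂ : ℝ) :
    Tendsto (fun r => ∫ s in Iic x₁, phi s *
        stdNormalCdf ((x₂ - r * s) / Real.sqrt (1 - r ^ 2)))
      (𝓝[>] (-1:ℝ)) (𝓝 (stdNormalCdf x₁ - stdNormalCdf (min x₁ (-x₂)))) := by
  have hval : stdNormalCdf x₁ - stdNormalCdf (min x₁ (-x₂)) =
      ∫ s in Iic x₁, (phi s - (Iic (-x₂)).indicator phi s) := by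
    rw [integral_sub integrable_phi.restrict
      (integrable_phi.restrict.indicator measurableSet_Iic)]
    congr 1
    rw [integral_indicator measurableSet_Iic,
      Measure.restrict_restrict measurableSet_Iic, Iic_inter_Iic, cdf_eq, min_comm]
  rw [hval]
  refine tendsto_integral_filter_of_dominated_convergence phi
    (Eventually.of_forall (fun r => aesm_F x₁ x₂ r))
    (Eventually.of_forall (fun r => Eventually.of_forall (fun s => F_le_phi r x₂ s)))
    integrable_phi.restrict ?_
  have hae : ∀ᵐ s : ℝ ∂(volume.restrict (Iic x₁)), s ≠ -x₂ := by
    refine ae_restrict_of_ae ?_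
    rw [ae_iff]
    have : {s : ℝ | ¬s ≠ -x₂} = {-x₂} := by ext s; simp
    rw [this]
    exact measure_singleton _
  filter_upwards [hae] with s hs
  have hnum : Tendsto (fun r : ℝ => x₂ - r * s) (𝓝[>] (-1:ℝ)) (𝓝 (x₂ + s)) := by
    have : Continuous (fun r : ℝ => x₂ - r * s) := by fun_prop
    have h2 := (this.tendsto (-1)).mono_left (nhdsWithin_le_nhds (s := Ioi (-1:ℝ)))
    simpa [sub_neg_eq_add] using h2
  rcases lt_or_gt_of_ne hs with h | h
  · -- s < -x₂, so x₂ + s < 0, u → atBot, cdf → 0, limit is phi s - phi s = 0? no: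
    -- indicator at s ∈ Iic (-x₂): phi s - phi s = 0
    have hu := (tendsto_u x₂ s hnum tendsto_sqrt_negone).2 (by linarith)
    have hcomp := cdf_tendsto_atBot.comp hu
    have hmul := hcomp.const_mul (phi s)
    rw [mul_zero] at hmul
    rw [Set.indicator_of_mem (mem_Iic.2 h.le), sub_self]
    exact hmul
  · have hu := (tendsto_u x₂ s hnum tendsto_sqrt_negone).1 (by linarith)
    have hcomp := cdf_tendsto_atTop.comp hu
    have hmul := hcomp.const_mul (phi s)
    rw [mul_one] at hmul
    rw [Set.indicator_of_notMem (by simpa using h), sub_zero]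
    exact hmul

lemma integral_g (x₁ x₂ : ℝ) :
    ∫ ρ in Ioo (-1:ℝ) 1, 1 / (2 * π * Real.sqrt (1 - ρ ^ 2)) *
        Real.exp (-(x₁ ^ 2 + x₂ ^ 2 - 2 * ρ * x₁ * x₂) / (2 * (1 - ρ ^ 2))) =
      stdNormalCdf (min x₁ x₂) - (stdNormalCdf x₁ - stdNormalCdf (min x₁ (-x₂))) := by
  have hint : IntervalIntegrable (fun ρ : ℝ => 1 / (2 * π * Real.sqrt (1 - ρ ^ 2)) *
      Real.exp (-(x₁ ^ 2 + x₂ ^ 2 - 2 * ρ * x₁ * x₂) / (2 * (1 - ρ ^ 2)))) volume (-1) 1 := by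
    rw [intervalIntegrable_iff_integrableOn_Ioc_of_le (by norm_num : (-1:ℝ) ≤ 1)]
    exact integrableOn_g x₁ x₂
  have key := intervalIntegral.integral_eq_sub_of_hasDerivAt_of_tendsto
    (by norm_num : (-1:ℝ) < 1) (fun ρ hρ => hasDerivAt_G x₁ x₂ hρ) hint
    (tendsto_G_negone x₁ x₂) (tendsto_G_one x₁ x₂)
  rw [intervalIntegral.integral_of_le (by norm_num : (-1:ℝ) ≤ 1),
    integral_Ioc_eq_integral_Ioo] at key
  rw [key]

lemma final_algebra (x₁ x₂ : ℝ) :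
    stdNormalCdf (min x₁ x₂) - (stdNormalCdf x₁ - stdNormalCdf (min x₁ (-x₂))) =
      1 - stdNormalCdf (max |x₁| |x₂|) := by
  rcases le_total x₂ x₁ with h1 | h1 <;> rcases le_total (-x₂) x₁ with h2 | h2
  · -- x₂ ≤ x₁, -x₂ ≤ x₁ : max |·| = x₁
    have hx1 : 0 ≤ x₁ := by linarith
    have habs : max |x₁| |x₂| = x₁ := by
      rw [abs_of_nonneg hx1]
      exact max_eq_left (abs_le.2 ⟨by linarith, h1⟩)
    rw [min_eq_right h1, min_eq_right h2, cdf_neg, habs]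
    ring
  · -- x₂ ≤ x₁ ≤ -x₂ : max |·| = -x₂
    have hx2 : x₂ ≤ 0 := by linarith
    have habs : max |x₁| |x₂| = -x₂ := by
      rw [abs_of_nonpos hx2]
      exact max_eq_right (abs_le.2 ⟨by linarith, h2⟩)
    rw [min_eq_right h1, min_eq_left h2, habs, cdf_neg]
    ring
  · -- -x₂ ≤ x₁, x₁ ≤ x₂ : max |·| = x₂
    have hx2 : 0 ≤ x₂ := by linarith
    have habs : max |x₁| |x₂| = x₂ := by
      rw [abs_of_nonneg hx2]
      exact max_eq_right (abs_le.2 ⟨by linarith, h1⟩)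
    rw [min_eq_left h1, min_eq_right h2, habs, cdf_neg]
    ring
  · -- x₁ ≤ x₂, x₁ ≤ -x₂ : max |·| = -x₁? no: |x₁| = -x₁, and |x₂| ≤ -x₁
    have hx1 : x₁ ≤ 0 := by linarith
    have habs : max |x₁| |x₂| = -x₁ := by
      rw [abs_of_nonpos hx1]
      exact max_eq_left (abs_le.2 ⟨by linarith, by linarith⟩)
    rw [min_eq_left h1, min_eq_left h2, habs, cdf_neg]
    ring

end UCM

open UCM

theorem uniform_correlation_mixture (x₁ x₂ : ℝ) :
    ∫ ρ in Ioo (-1 : ℝ) 1,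
        (1 / (4 * π * Real.sqrt (1 - ρ ^ 2))) *
          Real.exp (-(x₁ ^ 2 + x₂ ^ 2 - 2 * ρ * x₁ * x₂) / (2 * (1 - ρ ^ 2)))
      = (1 / 2) * (1 - stdNormalCdf (max |x₁| |x₂|)) := by
  have hpt : ∀ ρ ∈ Ioo (-1:ℝ) 1,
      (1 / (4 * π * Real.sqrt (1 - ρ ^ 2))) *
        Real.exp (-(x₁ ^ 2 + x₂ ^ 2 - 2 * ρ * x₁ * x₂) / (2 * (1 - ρ ^ 2))) =
      (1 / 2) * (1 / (2 * π * Real.sqrt (1 - ρ ^ 2)) *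
        Real.exp (-(x₁ ^ 2 + x₂ ^ 2 - 2 * ρ * x₁ * x₂) / (2 * (1 - ρ ^ 2)))) := by
    intro ρ _
    ring
  rw [setIntegral_congr_fun measurableSet_Ioo hpt, integral_const_mul,
    integral_g x₁ x₂, final_algebra x₁ x₂]
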